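/- Let ε ∼ N(0,1), μ̄ ∈ ℝ, σ̄ > 0, and let φ_b(x) = max(0, x−b) − max(0, −x−b) for b ≥ 0. Then the derivative with respect to b of E[φ_b(μ̄ + σ̄ε)] equals Φ((b−μ̄)/σ̄) − Φ((μ̄+b)/σ̄). -/

import Mathlib

open MeasureTheory ProbabilityTheory
open scoped NNReal

/-- Soft-thresholding (LSA) activation `φ_b(x) = max(0, x-b) - max(0, -x-b)`. -/
noncomputable def lsa (b x : ℝ) : ℝ := max 0 (x - b) - max 0 (-x - b)

/-- Standard normal CDF. -/
noncomputable def stdNormalCDF (t : ℝ) : ℝ := (gaussianReal 0 1 (Set.Iic t)).toReal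

lemma lsa_lipschitz (y : ℝ) : LipschitzWith 2 (fun b => lsa b y) := by
  have h1 : LipschitzWith 1 (fun b : ℝ => max 0 (y - b)) := by
    apply LipschitzWith.of_dist_le_mul
    intro a c
    simp only [Real.dist_eq, NNReal.coe_one, one_mul, max_comm (0:ℝ)]
    calc |max (y - a) 0 - max (y - c) 0| ≤ |(y - a) - (y - c)| := abs_max_sub_max_le_abs _ _ _
      _ = |a - c| := by rw [show (y - a) - (y - c) = -(a - c) by ring, abs_neg]
  have h2 : LipschitzWith 1 (fun b : ℝ => max 0 (-y - b)) := by
    apply LipschitzWith.of_dist_le_mul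
    intro a c
    simp only [Real.dist_eq, NNReal.coe_one, one_mul, max_comm (0:ℝ)]
    calc |max (-y - a) 0 - max (-y - c) 0| ≤ |(-y - a) - (-y - c)| := abs_max_sub_max_le_abs _ _ _
      _ = |a - c| := by rw [show (-y - a) - (-y - c) = -(a - c) by ring, abs_neg]
  have := h1.sub h2
  norm_num at this
  exact this

lemma lsa_abs_le {b : ℝ} (hb : 0 ≤ b) (y : ℝ) : |lsa b y| ≤ |y| := by
  have h1 : max 0 (y - b) ≤ |y| := max_le (abs_nonneg y) (by linarith [le_abs_self y])
  have h2 : max 0 (-y - b) ≤ |y| := max_le (abs_nonneg y) (by linarith [neg_le_abs y])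
  have h3 : (0:ℝ) ≤ max 0 (y - b) := le_max_left _ _
  have h4 : (0:ℝ) ≤ max 0 (-y - b) := le_max_left _ _
  rw [lsa, abs_sub_le_iff]
  constructor <;> linarith

lemma lsa_hasDerivAt {b : ℝ} (hb : 0 ≤ b) {y : ℝ} (h1 : y ≠ b) (h2 : y ≠ -b) :
    HasDerivAt (fun b' => lsa b' y)
      ((if b < y then (-1:ℝ) else 0) + (if y < -b then (1:ℝ) else 0)) b := by
  rcases lt_trichotomy y b with hyb | hyb | hyb
  · rcases lt_trichotomy y (-b) with hyn | hyn | hyn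
    · -- y < -b : lsa b' y = y + b' near b
      rw [if_neg (by linarith), if_pos hyn]
      have hmem : Set.Ioo y (-y) ∈ nhds b := Ioo_mem_nhds (by linarith) (by linarith)
      have : HasDerivAt (fun b' : ℝ => y + b') 1 b := by
        simpa using (hasDerivAt_id b).const_add y
      rw [show (0:ℝ) + 1 = 1 by norm_num]
      refine this.congr_of_eventuallyEq ?_
      filter_upwards [hmem] with b' hb'
      have hA : max 0 (y - b') = 0 := max_eq_left (by have := hb'.1; linarith)
      have hB : max 0 (-y - b') = -y - b' := max_eq_right (by have := hb'.2; linarith)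
      rw [lsa, hA, hB]; ring
    · exact absurd hyn h2
    · -- -b < y < b : lsa b' y = 0 near b
      rw [if_neg (by linarith), if_neg (by linarith)]
      have hmem : Set.Ioo (max y (-y)) (b+1) ∈ nhds b :=
        Ioo_mem_nhds (max_lt hyb (by linarith)) (by linarith)
      have : HasDerivAt (fun _ : ℝ => (0:ℝ)) 0 b := hasDerivAt_const b 0
      rw [show (0:ℝ) + 0 = 0 by norm_num]
      refine this.congr_of_eventuallyEq ?_
      filter_upwards [hmem] with b' hb'
      have hy : y < b' := lt_of_le_of_lt (le_max_left _ _) hb'.1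
      have hny : -y < b' := lt_of_le_of_lt (le_max_right _ _) hb'.1
      have hA : max 0 (y - b') = 0 := max_eq_left (by linarith)
      have hB : max 0 (-y - b') = 0 := max_eq_left (by linarith)
      rw [lsa, hA, hB]; ring
  · exact absurd hyb h1
  · -- b < y : lsa b' y = y - b' near b
    rw [if_pos hyb, if_neg (by linarith)]
    have hmem : Set.Ioo (-y) y ∈ nhds b := Ioo_mem_nhds (by linarith) hyb
    have : HasDerivAt (fun b' : ℝ => y - b') (-1) b := by
      simpa using (hasDerivAt_id b).const_sub y
    rw [show (-1:ℝ) + 0 = -1 by norm_num]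
    refine this.congr_of_eventuallyEq ?_
    filter_upwards [hmem] with b' hb'
    have hA : max 0 (y - b') = y - b' := max_eq_right (by have := hb'.2; linarith)
    have hB : max 0 (-y - b') = 0 := max_eq_left (by have := hb'.1; linarith)
    rw [lsa, hA, hB]; ring

lemma continuous_lsa (b : ℝ) : Continuous (lsa b) := by
  unfold lsa; fun_prop

lemma integrable_id_gaussian : Integrable (fun x : ℝ => x) (gaussianReal 0 1) := by
  rw [gaussianReal_of_var_ne_zero 0 one_ne_zero,
    integrable_withDensity_iff (measurable_gaussianPDF 0 1)
      (Filter.Eventually.of_forall fun x => ENNReal.ofReal_lt_top)]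
  have h : ∀ x : ℝ, (gaussianPDF 0 1 x).toReal = gaussianPDFReal 0 1 x := fun x =>
    ENNReal.toReal_ofReal (gaussianPDFReal_nonneg 0 1 x)
  simp_rw [h, gaussianPDFReal, NNReal.coe_one, mul_one]
  have key : Integrable (fun x : ℝ => x * Real.exp (-(1/2 : ℝ) * x ^ 2)) :=
    integrable_mul_exp_neg_mul_sq (by norm_num)
  refine (key.const_mul (√(2 * Real.pi))⁻¹).congr (Filter.Eventually.of_forall fun x => ?_)
  show (√(2 * Real.pi))⁻¹ * (x * Real.exp (-(1/2:ℝ) * x ^ 2))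
      = x * ((√(2 * Real.pi))⁻¹ * Real.exp (-(x - 0) ^ 2 / 2))
  rw [show -(x - 0)^2 / (2:ℝ) = -(1/2 : ℝ) * x ^ 2 by ring]
  ring

lemma gaussian_map_neg : (gaussianReal 0 1).map (fun x => -x) = gaussianReal 0 1 := by
  have h := @gaussianReal_map_const_mul 0 1 (-1)
  have h2 : (⟨(-1:ℝ)^2, sq_nonneg _⟩ : ℝ≥0) * 1 = 1 := by ext; norm_num
  have h3 : (fun x : ℝ => -x) = fun x => -1 * x := by funext x; ring
  rw [h3, h]; congr 1
  · ring

lemma gaussian_Ioi_eq (t : ℝ) :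
    (gaussianReal 0 1 (Set.Ioi t)).toReal = 1 - stdNormalCDF t := by
  have h : gaussianReal 0 1 (Set.Ioi t) = 1 - gaussianReal 0 1 (Set.Iic t) := by
    rw [← Set.compl_Iic, prob_compl_eq_one_sub measurableSet_Iic]
  rw [h, ENNReal.toReal_sub_of_le prob_le_one ENNReal.one_ne_top, ENNReal.toReal_one,
    stdNormalCDF]

lemma gaussian_Iio_neg (s : ℝ) :
    gaussianReal 0 1 (Set.Iio (-s)) = gaussianReal 0 1 (Set.Ioi s) := by
  conv_lhs => rw [← gaussian_map_neg]
  rw [Measure.map_apply measurable_neg measurableSet_Iio]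
  congr 1
  ext x
  simp [neg_lt_neg_iff, lt_neg]

/-- the derivative in `b` of `E[φ_b(μ̄ + σ̄ ε)]`, `ε ∼ N(0,1)`, equals
`Φ((b-μ̄)/σ̄) - Φ((μ̄+b)/σ̄)`. -/
theorem lsa_expectation_deriv (μ σ : ℝ) (hσ : 0 < σ) (b : ℝ) (hb : 0 ≤ b) :
    HasDerivAt (fun b' => ∫ x, lsa b' (μ + σ * x) ∂(gaussianReal 0 1))
      (stdNormalCDF ((b - μ) / σ) - stdNormalCDF ((μ + b) / σ)) b := by
  set γ := gaussianReal 0 1 with hγ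
  set t₁ := (b - μ) / σ with ht₁
  set t₂ := (-(μ + b)) / σ with ht₂
  set F' : ℝ → ℝ := fun x =>
    (if b < μ + σ * x then (-1:ℝ) else 0) + (if μ + σ * x < -b then (1:ℝ) else 0) with hF'
  have hiff1 : ∀ x : ℝ, (b < μ + σ * x) ↔ t₁ < x := by
    intro x; rw [ht₁, div_lt_iff₀ hσ]; constructor <;> intro h <;> nlinarith
  have hiff2 : ∀ x : ℝ, (μ + σ * x < -b) ↔ x < t₂ := by
    intro x; rw [ht₂, lt_div_iff₀ hσ]; constructor <;> intro h <;> nlinarith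
  have habs : γ ≪ (volume : Measure ℝ) := gaussianReal_absolutelyContinuous 0 one_ne_zero
  have hsingleton : ∀ a : ℝ, γ {a} = 0 := fun a => habs (Real.volume_singleton)
  -- a.e. differentiability
  have hae : ∀ᵐ x ∂γ, μ + σ * x ≠ b ∧ μ + σ * x ≠ -b := by
    have h1 : ∀ᵐ x ∂γ, x ≠ (b - μ) / σ := by
      rw [ae_iff]
      convert hsingleton ((b - μ) / σ) using 2
      ext x; simp
    have h2 : ∀ᵐ x ∂γ, x ≠ (-b - μ) / σ := by
      rw [ae_iff]
      convert hsingleton ((-b - μ) / σ) using 2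
      ext x; simp
    filter_upwards [h1, h2] with x hx1 hx2
    constructor
    · intro h; exact hx1 (by field_simp; linarith)
    · intro h; exact hx2 (by field_simp; linarith)
  have hint_abs : Integrable (fun x : ℝ => |μ| + σ * |x|) γ :=
    (integrable_const |μ|).add ((integrable_id_gaussian.abs).const_mul σ)
  obtain ⟨-, hderiv⟩ := hasDerivAt_integral_of_dominated_loc_of_lip
    (F := fun b' x => lsa b' (μ + σ * x)) (F' := F') (bound := fun _ => (2:ℝ))
    (Metric.ball_mem_nhds b one_pos)
    (Filter.Eventually.of_forall fun b' =>
      ((continuous_lsa b').comp (by fun_prop)).aestronglyMeasurable)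
    (hint_abs.mono'
      (((continuous_lsa b).comp (by fun_prop : Continuous fun x : ℝ => μ + σ * x)).aestronglyMeasurable)
      (Filter.Eventually.of_forall fun x => by
        have := lsa_abs_le hb (μ + σ * x)
        have h2 : |μ + σ * x| ≤ |μ| + σ * |x| := by
          calc |μ + σ * x| ≤ |μ| + |σ * x| := abs_add_le _ _
            _ = |μ| + σ * |x| := by rw [abs_mul, abs_of_pos hσ]
        calc ‖lsa b (μ + σ * x)‖ = |lsa b (μ + σ * x)| := rfl
          _ ≤ |μ + σ * x| := this
          _ ≤ |μ| + σ * |x| := h2))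
    (by
      apply Measurable.aestronglyMeasurable
      apply Measurable.add <;>
        exact Measurable.ite (measurableSet_lt (by fun_prop) (by fun_prop))
          measurable_const measurable_const)
    (Filter.Eventually.of_forall fun x => by
      have h := (lsa_lipschitz (μ + σ * x)).lipschitzOnWith (s := Metric.ball b 1)
      convert h using 1
      ext
      simp)
    (integrable_const 2)
    (by
      filter_upwards [hae] with x hx
      exact lsa_hasDerivAt hb hx.1 hx.2)
  have hval : ∫ x, F' x ∂γ = stdNormalCDF t₁ - stdNormalCDF ((μ + b) / σ) := by
    have hrw : F' = fun x => (Set.Ioi t₁).indicator (fun _ => (-1:ℝ)) x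
        + (Set.Iio t₂).indicator (fun _ => (1:ℝ)) x := by
      funext x
      rw [hF']
      simp only [Set.indicator_apply, Set.mem_Ioi, Set.mem_Iio, hiff1 x, hiff2 x]
    rw [hrw, integral_add
      ((integrable_const (-1:ℝ)).indicator measurableSet_Ioi)
      ((integrable_const (1:ℝ)).indicator measurableSet_Iio),
      integral_indicator_const _ measurableSet_Ioi,
      integral_indicator_const _ measurableSet_Iio]
    have h2 : γ (Set.Iio t₂) = γ (Set.Ioi ((μ + b) / σ)) := by
      rw [ht₂, neg_div]
      exact gaussian_Iio_neg _
    rw [measureReal_def, measureReal_def, h2]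
    simp only [smul_eq_mul, mul_neg, mul_one]
    rw [hγ, gaussian_Ioi_eq, gaussian_Ioi_eq]
    ring
  rw [hval] at hderiv
  exact hderiv
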